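/- For any nonnegative matrix A ∈ ℝ^{n×n} with s = ∑_{ij} A_{ij}, the capacity satisfies cap(A) ≥ s − n·√(Δ(A)/2). -/

import Mathlib

open Matrix BigOperators

/-- Capacity of a nonnegative matrix. -/
noncomputable def matCap {ι κ : Type*} [Fintype ι] [Fintype κ] (A : Matrix ι κ ℝ) : ℝ :=
  sInf {c : ℝ | ∃ x : κ → ℝ, (∀ j, 0 < x j) ∧
    c = (Fintype.card ι : ℝ) * (∏ i, A.mulVec x i) ^ ((1 : ℝ) / (Fintype.card ι : ℝ)) /
        (∏ j, x j) ^ ((1 : ℝ) / (Fintype.card κ : ℝ))}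

/-- Size of a matrix: the sum of all entries. -/
noncomputable def matSize {ι κ : Type*} [Fintype ι] [Fintype κ] (A : Matrix ι κ ℝ) : ℝ :=
  ∑ i, ∑ j, A i j

/-- The measure Δ of distance to doubly balanced. -/
noncomputable def matDelta {ι κ : Type*} [Fintype ι] [Fintype κ] (A : Matrix ι κ ℝ) : ℝ :=
  (1 / (Fintype.card ι : ℝ)) * ∑ i, (matSize A - (Fintype.card ι : ℝ) * ∑ j, A i j) ^ 2 +
  (1 / (Fintype.card κ : ℝ)) * ∑ j, (matSize A - (Fintype.card κ : ℝ) * ∑ i, A i j) ^ 2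

namespace MatCapAux

open Finset

variable {n : ℕ}

section Flow

variable (m : ℝ) (A : Fin n → Fin n → ℝ)

/-- The relaxed transportation polytope. -/
def QSet : Set (Fin n → Fin n → ℝ) :=
  {W | (∀ i j, 0 ≤ W i j) ∧ (∀ i j, W i j ≤ A i j) ∧
    (∀ i, ∑ j, W i j ≤ m) ∧ (∀ j, ∑ i, W i j ≤ m)}

/-- Residual reachability from deficient rows. -/
inductive Reach (W : Fin n → Fin n → ℝ) : Fin n ⊕ Fin n → Prop
  | base (i : Fin n) : (∑ j, W i j < m) → Reach W (Sum.inl i)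
  | fwd (i j : Fin n) : Reach W (Sum.inl i) → W i j < A i j → Reach W (Sum.inr j)
  | bwd (i j : Fin n) : Reach W (Sum.inr j) → 0 < W i j → Reach W (Sum.inl i)

/-- Perturb a single entry. -/
def perturb (W : Fin n → Fin n → ℝ) (i j : Fin n) (δ : ℝ) : Fin n → Fin n → ℝ :=
  fun a b => W a b + if a = i ∧ b = j then δ else 0

lemma perturb_apply (W : Fin n → Fin n → ℝ) (i j a b : Fin n) (δ : ℝ) :
    perturb W i j δ a b = W a b + if a = i ∧ b = j then δ else 0 := rfl

lemma perturb_apply_self (W : Fin n → Fin n → ℝ) (i j : Fin n) (δ : ℝ) :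
    perturb W i j δ i j = W i j + δ := by simp [perturb]

lemma perturb_apply_ne (W : Fin n → Fin n → ℝ) {i j a b : Fin n} (δ : ℝ)
    (h : ¬(a = i ∧ b = j)) : perturb W i j δ a b = W a b := by simp [perturb, h]

lemma perturb_rowsum (W : Fin n → Fin n → ℝ) (i j a : Fin n) (δ : ℝ) :
    ∑ b, perturb W i j δ a b = (∑ b, W a b) + if a = i then δ else 0 := by
  unfold perturb
  rw [Finset.sum_add_distrib]
  congr 1
  by_cases ha : a = i <;> simp [ha]

lemma perturb_colsum (W : Fin n → Fin n → ℝ) (i j b : Fin n) (δ : ℝ) :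
    ∑ a, perturb W i j δ a b = (∑ a, W a b) + if b = j then δ else 0 := by
  unfold perturb
  rw [Finset.sum_add_distrib]
  congr 1
  by_cases hb : b = j <;> simp [hb]

/-- Row invariant: we can reroute `δ` units so that row `i` has `δ` slack. -/
def RowInv (W : Fin n → Fin n → ℝ) (i : Fin n) : Prop :=
  ∃ ε : ℝ, 0 < ε ∧ ∃ K : ℝ, 0 ≤ K ∧ ∀ δ : ℝ, 0 < δ → δ ≤ ε → ∃ W' : Fin n → Fin n → ℝ,
    (∀ a b, 0 ≤ W' a b) ∧ (∀ a b, W' a b ≤ A a b) ∧ (∀ a b, |W' a b - W a b| ≤ K * δ) ∧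
    (∀ a, ∑ b, W' a b ≤ m) ∧ (∑ b, W' i b ≤ m - δ) ∧ (∀ b, ∑ a, W' a b = ∑ a, W a b)

/-- Column invariant: we can push `δ` extra units into column `j`. -/
def ColInv (W : Fin n → Fin n → ℝ) (j : Fin n) : Prop :=
  ∃ ε : ℝ, 0 < ε ∧ ∃ K : ℝ, 0 ≤ K ∧ ∀ δ : ℝ, 0 < δ → δ ≤ ε → ∃ W' : Fin n → Fin n → ℝ,
    (∀ a b, 0 ≤ W' a b) ∧ (∀ a b, W' a b ≤ A a b) ∧ (∀ a b, |W' a b - W a b| ≤ K * δ) ∧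
    (∀ a, ∑ b, W' a b ≤ m) ∧ (∀ b, b ≠ j → ∑ a, W' a b = ∑ a, W a b) ∧
    (∑ a, W' a j = ∑ a, W a j + δ)

lemma reach_invariant {W : Fin n → Fin n → ℝ} (hW : W ∈ QSet m A) :
    ∀ v, Reach m A W v → Sum.elim (RowInv m A W) (ColInv m A W) v := by
  intro v h
  induction h with
  | base i hdef =>
    refine ⟨m - ∑ j, W i j, by linarith, 0, le_refl 0, fun δ hδ hδε => ?_⟩
    exact ⟨W, hW.1, hW.2.1, fun a b => by simp, hW.2.2.1, by linarith, fun b => rfl⟩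
  | fwd i j hr hs ih =>
    simp only [Sum.elim_inl, Sum.elim_inr] at ih ⊢
    obtain ⟨ε₁, hε₁, K₁, hK₁, H⟩ := ih
    have hslack : 0 < A i j - W i j := by linarith
    refine ⟨min ε₁ ((A i j - W i j) / (K₁ + 1)), lt_min hε₁ (by positivity), K₁ + 1,
      by linarith, fun δ hδ hδε => ?_⟩
    have hδε₁ : δ ≤ ε₁ := le_trans hδε (min_le_left _ _)
    have hδs : (K₁ + 1) * δ ≤ A i j - W i j := by
      have h2 := le_trans hδε (min_le_right _ _)
      rw [le_div_iff₀ (by linarith)] at h2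
      linarith
    obtain ⟨W', h0, hle, hcl, hrow, hrowi, hcol⟩ := H δ hδ hδε₁
    refine ⟨perturb W' i j δ, ?_, ?_, ?_, ?_, ?_, ?_⟩
    · intro a b
      rw [perturb_apply]
      have := h0 a b; split_ifs <;> linarith
    · intro a b
      by_cases hab : a = i ∧ b = j
      · obtain ⟨rfl, rfl⟩ := hab
        rw [perturb_apply_self]
        have := (abs_le.mp (hcl a b)).2
        linarith
      · rw [perturb_apply_ne _ _ hab]; exact hle a b
    · intro a b
      by_cases hab : a = i ∧ b = j
      · obtain ⟨rfl, rfl⟩ := hab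
        rw [perturb_apply_self]
        have h1 := abs_le.mp (hcl a b)
        rw [abs_le]
        constructor <;> nlinarith [h1.1, h1.2]
      · rw [perturb_apply_ne _ _ hab]
        exact le_trans (hcl a b) (by nlinarith)
    · intro a
      rw [perturb_rowsum]
      by_cases ha : a = i
      · subst ha; simp only [if_true]; linarith [hrowi]
      · simp only [ha, if_false, add_zero]; exact hrow a
    · intro b hb
      rw [perturb_colsum]
      simp only [hb, if_false, add_zero]
      exact hcol b
    · rw [perturb_colsum]
      simp only [if_true, hcol j]
  | bwd i j hc hp ih =>
    simp only [Sum.elim_inl, Sum.elim_inr] at ih ⊢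
    obtain ⟨ε₁, hε₁, K₁, hK₁, H⟩ := ih
    refine ⟨min ε₁ (W i j / (K₁ + 1)), lt_min hε₁ (by positivity), K₁ + 1,
      by linarith, fun δ hδ hδε => ?_⟩
    have hδε₁ : δ ≤ ε₁ := le_trans hδε (min_le_left _ _)
    have hδs : (K₁ + 1) * δ ≤ W i j := by
      have h2 := le_trans hδε (min_le_right _ _)
      rw [le_div_iff₀ (by linarith)] at h2
      linarith
    obtain ⟨W', h0, hle, hcl, hrow, hcolne, hcolj⟩ := H δ hδ hδε₁
    refine ⟨perturb W' i j (-δ), ?_, ?_, ?_, ?_, ?_, ?_⟩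
    · intro a b
      by_cases hab : a = i ∧ b = j
      · obtain ⟨rfl, rfl⟩ := hab
        rw [perturb_apply_self]
        have := (abs_le.mp (hcl a b)).1
        linarith
      · rw [perturb_apply_ne _ _ hab]; exact h0 a b
    · intro a b
      rw [perturb_apply]
      have := hle a b; split_ifs <;> linarith
    · intro a b
      by_cases hab : a = i ∧ b = j
      · obtain ⟨rfl, rfl⟩ := hab
        rw [perturb_apply_self]
        have h1 := abs_le.mp (hcl a b)
        rw [abs_le]
        constructor <;> nlinarith [h1.1, h1.2]
      · rw [perturb_apply_ne _ _ hab]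
        exact le_trans (hcl a b) (by nlinarith)
    · intro a
      rw [perturb_rowsum]
      have := hrow a
      split_ifs <;> linarith
    · rw [perturb_rowsum]
      simp only [if_true]
      have := hrow i
      linarith
    · intro b
      rw [perturb_colsum]
      by_cases hb : b = j
      · subst hb; simp only [if_true]; rw [hcolj]; ring
      · simp only [hb, if_false, add_zero]; exact hcolne b hb

lemma qset_isCompact : IsCompact (QSet m A) := by
  have hsub : QSet m A ⊆ Set.Icc (fun _ _ => 0 : Fin n → Fin n → ℝ) A := by
    intro W hW
    constructor
    · intro i; intro j; exact hW.1 i j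
    · intro i; intro j; exact hW.2.1 i j
  have hclosed : IsClosed (QSet m A) := by
    have h1 : IsClosed {W : Fin n → Fin n → ℝ | ∀ i j, 0 ≤ W i j} := by
      rw [Set.setOf_forall]
      refine isClosed_iInter fun i => ?_
      rw [Set.setOf_forall]
      refine isClosed_iInter fun j => ?_
      exact isClosed_le continuous_const ((continuous_apply j).comp (continuous_apply i))
    have h2 : IsClosed {W : Fin n → Fin n → ℝ | ∀ i j, W i j ≤ A i j} := by
      rw [Set.setOf_forall]
      refine isClosed_iInter fun i => ?_
      rw [Set.setOf_forall]
      refine isClosed_iInter fun j => ?_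
      exact isClosed_le ((continuous_apply j).comp (continuous_apply i)) continuous_const
    have h3 : IsClosed {W : Fin n → Fin n → ℝ | ∀ i, ∑ j, W i j ≤ m} := by
      rw [Set.setOf_forall]
      refine isClosed_iInter fun i => ?_
      exact isClosed_le (continuous_finset_sum _ fun j _ =>
        (continuous_apply j).comp (continuous_apply i)) continuous_const
    have h4 : IsClosed {W : Fin n → Fin n → ℝ | ∀ j, ∑ i, W i j ≤ m} := by
      rw [Set.setOf_forall]
      refine isClosed_iInter fun j => ?_
      exact isClosed_le (continuous_finset_sum _ fun i _ =>
        (continuous_apply j).comp (continuous_apply i)) continuous_const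
    have : QSet m A = {W : Fin n → Fin n → ℝ | ∀ i j, 0 ≤ W i j} ∩
        ({W | ∀ i j, W i j ≤ A i j} ∩ ({W | ∀ i, ∑ j, W i j ≤ m} ∩ {W | ∀ j, ∑ i, W i j ≤ m})) := by
      ext W
      simp only [QSet, Set.mem_setOf_eq, Set.mem_inter_iff]
    rw [this]
    exact h1.inter (h2.inter (h3.inter h4))
  exact IsCompact.of_isClosed_subset isCompact_Icc hclosed hsub

lemma exists_balanced (hm : 0 ≤ m) (hA : ∀ i j, 0 ≤ A i j)
    (hcut : ∀ R C : Finset (Fin n),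
      (n : ℝ) * m ≤ m * R.card + m * C.card + ∑ i ∈ Rᶜ, ∑ j ∈ Cᶜ, A i j) :
    ∃ W : Fin n → Fin n → ℝ, (∀ i j, 0 ≤ W i j) ∧ (∀ i j, W i j ≤ A i j) ∧
      (∀ i, ∑ j, W i j = m) ∧ (∀ j, ∑ i, W i j = m) := by
  classical
  have h0Q : (fun _ _ => 0 : Fin n → Fin n → ℝ) ∈ QSet m A := by
    refine ⟨fun i j => le_refl 0, fun i j => hA i j, ?_, ?_⟩ <;> intro i <;> simp [hm]
  have hcont : Continuous (fun W : Fin n → Fin n → ℝ => ∑ i, ∑ j, W i j) :=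
    continuous_finset_sum _ fun i _ => continuous_finset_sum _ fun j _ =>
      (continuous_apply j).comp (continuous_apply i)
  obtain ⟨W, hWQ, hmax⟩ := (qset_isCompact m A).exists_isMaxOn ⟨_, h0Q⟩ hcont.continuousOn
  -- no reachable deficient column
  have hndef : ∀ j, Reach m A W (Sum.inr j) → m ≤ ∑ i, W i j := by
    intro j hreach
    by_contra hlt
    push_neg at hlt
    have hinv := reach_invariant m A hWQ _ hreach
    simp only [Sum.elim_inr] at hinv
    obtain ⟨ε, hε, K, hK, H⟩ := hinv
    set δ := min ε (m - ∑ i, W i j) with hδdef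
    have hδpos : 0 < δ := lt_min hε (by linarith)
    obtain ⟨W', h0, hle, hcl, hrow, hcolne, hcolj⟩ := H δ hδpos (min_le_left _ _)
    have hW'Q : W' ∈ QSet m A := by
      refine ⟨h0, hle, hrow, fun b => ?_⟩
      by_cases hb : b = j
      · subst hb
        rw [hcolj]
        have : δ ≤ m - ∑ i, W i b := min_le_right _ _
        linarith
      · rw [hcolne b hb]; exact hWQ.2.2.2 b
    have hsum : ∑ i, ∑ b, W' i b = (∑ i, ∑ b, W i b) + δ := by
      rw [Finset.sum_comm (γ := Fin n)]
      rw [Finset.sum_comm (f := fun i b => W i b)]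
      have : ∀ b, ∑ a, W' a b = (∑ a, W a b) + if b = j then δ else 0 := by
        intro b
        by_cases hb : b = j
        · subst hb; rw [hcolj]; simp
        · rw [hcolne b hb]; simp [hb]
      rw [Finset.sum_congr rfl fun b _ => this b, Finset.sum_add_distrib]
      simp
    have := hmax hW'Q
    simp only [Set.mem_setOf_eq] at this
    rw [hsum] at this
    linarith
  -- reachable sets
  set R : Finset (Fin n) := univ.filter (fun i => Reach m A W (Sum.inl i)) with hR
  set C : Finset (Fin n) := univ.filter (fun j => Reach m A W (Sum.inr j)) with hC
  have hmemR : ∀ i, i ∈ R ↔ Reach m A W (Sum.inl i) := by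
    intro i; simp [hR]
  have hmemC : ∀ j, j ∈ C ↔ Reach m A W (Sum.inr j) := by
    intro j; simp [hC]
  have keyrow : ∀ i ∉ R, ∑ j, W i j = m := by
    intro i hi
    refine le_antisymm (hWQ.2.2.1 i) (not_lt.mp fun hlt => hi ((hmemR i).mpr (Reach.base i hlt)))
  have keysat : ∀ i ∈ R, ∀ j, j ∉ C → W i j = A i j := by
    intro i hi j hj
    refine le_antisymm (hWQ.2.1 i j) (not_lt.mp fun hlt => hj ((hmemC j).mpr
      (Reach.fwd i j ((hmemR i).mp hi) hlt)))
  have keyzero : ∀ j ∈ C, ∀ i, i ∉ R → W i j = 0 := by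
    intro j hj i hi
    refine le_antisymm (not_lt.mp fun hlt => hi ((hmemR i).mpr
      (Reach.bwd i j ((hmemC j).mp hj) hlt))) (hWQ.1 i j)
  have keycol : ∀ j ∈ C, ∑ i, W i j = m :=
    fun j hj => le_antisymm (hWQ.2.2.2 j) (hndef j ((hmemC j).mp hj))
  -- total sum is at least n * m
  have htot : (n : ℝ) * m ≤ ∑ i, ∑ j, W i j := by
    have hsplit : ∑ i, ∑ j, W i j = (∑ i ∈ R, ∑ j, W i j) + ∑ i ∈ Rᶜ, ∑ j, W i j :=
      (Finset.sum_add_sum_compl R _).symm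
    have hRc : ∑ i ∈ Rᶜ, ∑ j, W i j = m * (Rᶜ).card := by
      rw [Finset.sum_congr rfl fun i hi => keyrow i (Finset.mem_compl.mp hi)]
      rw [Finset.sum_const, nsmul_eq_mul, mul_comm]
    have hRrow : ∀ i ∈ R, ∑ j, W i j = (∑ j ∈ C, W i j) + ∑ j ∈ Cᶜ, A i j := by
      intro i hi
      rw [← Finset.sum_add_sum_compl C (fun j => W i j)]
      congr 1
      exact Finset.sum_congr rfl fun j hj => keysat i hi j (Finset.mem_compl.mp hj)
    have hcolsplit : ∑ i ∈ R, ∑ j ∈ C, W i j = m * C.card := by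
      rw [Finset.sum_comm]
      have : ∀ j ∈ C, ∑ i ∈ R, W i j = m := by
        intro j hj
        have h1 : ∑ i ∈ R, W i j + ∑ i ∈ Rᶜ, W i j = ∑ i, W i j :=
          Finset.sum_add_sum_compl R _
        have h2 : ∑ i ∈ Rᶜ, W i j = 0 :=
          Finset.sum_eq_zero fun i hi => keyzero j hj i (Finset.mem_compl.mp hi)
        rw [h2, add_zero] at h1
        rw [h1, keycol j hj]
      rw [Finset.sum_congr rfl this, Finset.sum_const, nsmul_eq_mul, mul_comm]
    have hcutRC := hcut Rᶜ C
    rw [compl_compl] at hcutRC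
    have hfinal : ∑ i, ∑ j, W i j
        = m * (Rᶜ).card + m * C.card + ∑ i ∈ R, ∑ j ∈ Cᶜ, A i j := by
      rw [hsplit, Finset.sum_congr rfl hRrow, Finset.sum_add_distrib, hcolsplit, hRc]
      ring
    rw [hfinal]
    exact hcutRC
  -- conclude equalities
  have hrows : ∀ i, ∑ j, W i j = m := by
    by_contra hcon
    push_neg at hcon
    obtain ⟨i0, hi0⟩ := hcon
    have hi0lt : ∑ j, W i0 j < m := lt_of_le_of_ne (hWQ.2.2.1 i0) hi0
    have : ∑ i, ∑ j, W i j < ∑ _i : Fin n, m :=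
      Finset.sum_lt_sum (fun i _ => hWQ.2.2.1 i) ⟨i0, Finset.mem_univ i0, hi0lt⟩
    simp only [Finset.sum_const, Finset.card_univ, Fintype.card_fin, nsmul_eq_mul] at this
    linarith
  have hcols : ∀ j, ∑ i, W i j = m := by
    by_contra hcon
    push_neg at hcon
    obtain ⟨j0, hj0⟩ := hcon
    have hj0lt : ∑ i, W i j0 < m := lt_of_le_of_ne (hWQ.2.2.2 j0) hj0
    have h1 : ∑ j, ∑ i, W i j < ∑ _j : Fin n, m :=
      Finset.sum_lt_sum (fun j _ => hWQ.2.2.2 j) ⟨j0, Finset.mem_univ j0, hj0lt⟩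
    rw [Finset.sum_comm] at h1
    simp only [Finset.sum_const, Finset.card_univ, Fintype.card_fin, nsmul_eq_mul] at h1
    linarith
  exact ⟨W, hWQ.1, hWQ.2.1, hrows, hcols⟩


end Flow

section Cut

lemma sqrt_add_sqrt_le {a b : ℝ} (ha : 0 ≤ a) (hb : 0 ≤ b) :
    Real.sqrt a + Real.sqrt b ≤ Real.sqrt (2 * (a + b)) := by
  have h1 : 0 ≤ Real.sqrt a + Real.sqrt b := by positivity
  have h2 : (Real.sqrt a + Real.sqrt b) ^ 2 ≤ 2 * (a + b) := by
    have hsa : Real.sqrt a ^ 2 = a := Real.sq_sqrt ha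
    have hsb : Real.sqrt b ^ 2 = b := Real.sq_sqrt hb
    nlinarith [sq_nonneg (Real.sqrt a - Real.sqrt b)]
  calc Real.sqrt a + Real.sqrt b = Real.sqrt ((Real.sqrt a + Real.sqrt b) ^ 2) :=
        (Real.sqrt_sq h1).symm
    _ ≤ Real.sqrt (2 * (a + b)) := Real.sqrt_le_sqrt h2

/-- Partial sums of mean-zero deviations are bounded using both sides. -/
lemma partial_sum_dev_le (hn : 0 < n) (d : Fin n → ℝ) (hzero : ∑ i, d i = 0)
    (R : Finset (Fin n)) :
    ∑ i ∈ R, d i ≤ Real.sqrt ((n : ℝ) * (∑ i, d i ^ 2) / 4) := by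
  set X := ∑ i ∈ R, d i with hX
  have hXc : ∑ i ∈ Rᶜ, d i = -X := by
    have := Finset.sum_add_sum_compl R d
    rw [hzero] at this
    linarith
  have h1 : X ^ 2 ≤ (R.card : ℝ) * ∑ i ∈ R, d i ^ 2 := by
    exact_mod_cast sq_sum_le_card_mul_sum_sq (s := R) (f := d)
  have h2 : X ^ 2 ≤ ((Rᶜ.card : ℝ)) * ∑ i ∈ Rᶜ, d i ^ 2 := by
    have := sq_sum_le_card_mul_sum_sq (s := Rᶜ) (f := d)
    rw [hXc] at this
    calc X ^ 2 = (-X) ^ 2 := by ring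
      _ ≤ _ := by exact_mod_cast this
  have hcards : (R.card : ℝ) + (Rᶜ.card : ℝ) = n := by
    have h := Finset.card_add_card_compl R
    rw [Fintype.card_fin] at h
    exact_mod_cast h
  have hsplit : ∑ i ∈ R, d i ^ 2 + ∑ i ∈ Rᶜ, d i ^ 2 = ∑ i, d i ^ 2 :=
    Finset.sum_add_sum_compl R _
  have hX2 : (n : ℝ) * X ^ 2 ≤ (R.card : ℝ) * (Rᶜ.card : ℝ) * ∑ i, d i ^ 2 := by
    have hb1 : (Rᶜ.card : ℝ) * X ^ 2 ≤ (Rᶜ.card : ℝ) * ((R.card : ℝ) * ∑ i ∈ R, d i ^ 2) :=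
      mul_le_mul_of_nonneg_left h1 (Nat.cast_nonneg _)
    have hb2 : (R.card : ℝ) * X ^ 2 ≤ (R.card : ℝ) * ((Rᶜ.card : ℝ) * ∑ i ∈ Rᶜ, d i ^ 2) :=
      mul_le_mul_of_nonneg_left h2 (Nat.cast_nonneg _)
    have hc : (Rᶜ.card : ℝ) * ((R.card : ℝ) * ∑ i ∈ R, d i ^ 2)
        + (R.card : ℝ) * ((Rᶜ.card : ℝ) * ∑ i ∈ Rᶜ, d i ^ 2)
        = (R.card : ℝ) * (Rᶜ.card : ℝ) * ∑ i, d i ^ 2 := by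
      rw [← hsplit]; ring
    have hXsum : (R.card : ℝ) * X ^ 2 + (Rᶜ.card : ℝ) * X ^ 2 = (n : ℝ) * X ^ 2 := by
      rw [← hcards]; ring
    linarith [hb1, hb2, hc, hXsum]
  have hprod : (R.card : ℝ) * (Rᶜ.card : ℝ) ≤ (n : ℝ) ^ 2 / 4 := by
    nlinarith [sq_nonneg ((R.card : ℝ) - (Rᶜ.card : ℝ))]
  have hd2 : 0 ≤ ∑ i, d i ^ 2 := Finset.sum_nonneg fun i _ => sq_nonneg _
  have hfin : X ^ 2 ≤ (n : ℝ) * (∑ i, d i ^ 2) / 4 := by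
    have hnpos : (0 : ℝ) < n := by exact_mod_cast hn
    have := le_trans hX2 (by nlinarith : (R.card : ℝ) * (Rᶜ.card : ℝ) * ∑ i, d i ^ 2
      ≤ (n : ℝ) ^ 2 / 4 * ∑ i, d i ^ 2)
    nlinarith
  calc X ≤ |X| := le_abs_self X
    _ = Real.sqrt (X ^ 2) := (Real.sqrt_sq_eq_abs X).symm
    _ ≤ _ := Real.sqrt_le_sqrt hfin

lemma cut_condition (hn : 0 < n) (A : Fin n → Fin n → ℝ) (hA : ∀ i j, 0 ≤ A i j)
    (m : ℝ) (hm : 0 ≤ m)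
    (hmle : m ≤ (∑ i, ∑ j, A i j) / n -
      Real.sqrt ((n : ℝ) * ((∑ i, ((∑ j, A i j) - (∑ i, ∑ j, A i j) / n) ^ 2)
        + ∑ j, ((∑ i, A i j) - (∑ i, ∑ j, A i j) / n) ^ 2) / 2)) :
    ∀ R C : Finset (Fin n),
      (n : ℝ) * m ≤ m * R.card + m * C.card + ∑ i ∈ Rᶜ, ∑ j ∈ Cᶜ, A i j := by
  intro R C
  have hnR : (0:ℝ) < n := by exact_mod_cast hn
  set s := ∑ i, ∑ j, A i j with hs
  set d : Fin n → ℝ := fun i => (∑ j, A i j) - s / n with hd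
  set e : Fin n → ℝ := fun j => (∑ i, A i j) - s / n with he
  have hσnn : 0 ≤ ∑ i ∈ Rᶜ, ∑ j ∈ Cᶜ, A i j :=
    Finset.sum_nonneg fun i _ => Finset.sum_nonneg fun j _ => hA i j
  by_cases hcard : n ≤ R.card + C.card
  · have : (n : ℝ) ≤ (R.card : ℝ) + C.card := by exact_mod_cast hcard
    nlinarith
  · push_neg at hcard
    have hk1 : (R.card : ℝ) + C.card + 1 ≤ n := by exact_mod_cast hcard
    set k : ℝ := (n : ℝ) - R.card - C.card with hkdef
    have hk : 1 ≤ k := by simp only [hkdef]; linarith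
    -- deviations sum to zero
    have hdzero : ∑ i, d i = 0 := by
      simp only [hd, Finset.sum_sub_distrib, Finset.sum_const, Finset.card_univ,
        Fintype.card_fin, nsmul_eq_mul]
      field_simp
      linarith
    have hezero : ∑ j, e j = 0 := by
      simp only [he, Finset.sum_sub_distrib, Finset.sum_const, Finset.card_univ,
        Fintype.card_fin, nsmul_eq_mul]
      rw [Finset.sum_comm]
      field_simp
      linarith
    set X := ∑ i ∈ R, d i with hX
    set Y := ∑ j ∈ C, e j with hY
    set Dr := ∑ i, d i ^ 2 with hDr
    set Dc := ∑ j, e j ^ 2 with hDc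
    have hDrnn : 0 ≤ Dr := Finset.sum_nonneg fun i _ => sq_nonneg _
    have hDcnn : 0 ≤ Dc := Finset.sum_nonneg fun i _ => sq_nonneg _
    -- the lower bound on the remaining block
    have hblock : k * (s / n) - X - Y ≤ ∑ i ∈ Rᶜ, ∑ j ∈ Cᶜ, A i j := by
      have hrow : ∑ i ∈ Rᶜ, ∑ j, A i j
          = (∑ i ∈ Rᶜ, ∑ j ∈ Cᶜ, A i j) + ∑ i ∈ Rᶜ, ∑ j ∈ C, A i j := by
        rw [← Finset.sum_add_distrib]
        refine Finset.sum_congr rfl fun i _ => ?_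
        rw [add_comm, Finset.sum_add_sum_compl C]
      have hcolle : ∑ i ∈ Rᶜ, ∑ j ∈ C, A i j ≤ ∑ j ∈ C, ∑ i, A i j := by
        rw [Finset.sum_comm]
        refine Finset.sum_le_sum fun j _ => ?_
        exact Finset.sum_le_sum_of_subset_of_nonneg (Finset.subset_univ _)
          (fun i _ _ => hA i j)
      have hRcsum : ∑ i ∈ Rᶜ, ∑ j, A i j = ((n : ℝ) - R.card) * (s / n) - X := by
        have h1 : ∀ i, ∑ j, A i j = s / n + d i := fun i => by simp [hd]
        have hXc : ∑ i ∈ Rᶜ, d i = -X := by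
          have := Finset.sum_add_sum_compl R d
          rw [hdzero] at this
          linarith
        rw [Finset.sum_congr rfl fun i _ => h1 i, Finset.sum_add_distrib, hXc,
          Finset.sum_const, nsmul_eq_mul]
        have hcc : ((Rᶜ.card : ℝ)) = (n : ℝ) - R.card := by
          have h := Finset.card_add_card_compl R
          rw [Fintype.card_fin] at h
          have h2 : ((R.card : ℝ)) + (Rᶜ.card : ℝ) = n := by exact_mod_cast h
          linarith
        rw [hcc]
        ring
      have hCsum : ∑ j ∈ C, ∑ i, A i j = (C.card : ℝ) * (s / n) + Y := by
        have h1 : ∀ j, ∑ i, A i j = s / n + e j := fun j => by simp [he]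
        rw [Finset.sum_congr rfl fun j _ => h1 j, Finset.sum_add_distrib,
          Finset.sum_const, nsmul_eq_mul]
      have : ((n : ℝ) - R.card) * (s / n) - X - ((C.card : ℝ) * (s / n) + Y)
          ≤ ∑ i ∈ Rᶜ, ∑ j ∈ Cᶜ, A i j := by
        linarith [hrow, hcolle, hRcsum, hCsum]
      calc k * (s / n) - X - Y
          = ((n : ℝ) - R.card) * (s / n) - X - ((C.card : ℝ) * (s / n) + Y) := by
            simp only [hkdef]; ring
        _ ≤ _ := this
    -- bound X + Y
    have hXb : X ≤ Real.sqrt ((n : ℝ) * Dr / 4) := partial_sum_dev_le hn d hdzero R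
    have hYb : Y ≤ Real.sqrt ((n : ℝ) * Dc / 4) := partial_sum_dev_le hn e hezero C
    have hXY : X + Y ≤ Real.sqrt ((n : ℝ) * (Dr + Dc) / 2) := by
      have h2 : Real.sqrt ((n : ℝ) * Dr / 4) + Real.sqrt ((n : ℝ) * Dc / 4)
          ≤ Real.sqrt (2 * ((n : ℝ) * Dr / 4 + (n : ℝ) * Dc / 4)) :=
        sqrt_add_sqrt_le (by positivity) (by positivity)
      have h3 : 2 * ((n : ℝ) * Dr / 4 + (n : ℝ) * Dc / 4) = (n : ℝ) * (Dr + Dc) / 2 := by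
        ring
      rw [h3] at h2
      linarith
    have hsqrtnn : 0 ≤ Real.sqrt ((n : ℝ) * (Dr + Dc) / 2) := Real.sqrt_nonneg _
    have hmle' : m ≤ s / n - Real.sqrt ((n : ℝ) * (Dr + Dc) / 2) := hmle
    -- conclude
    have hkm : k * m ≤ ∑ i ∈ Rᶜ, ∑ j ∈ Cᶜ, A i j := by
      have h1 : k * m ≤ k * (s / n - Real.sqrt ((n : ℝ) * (Dr + Dc) / 2)) :=
        mul_le_mul_of_nonneg_left hmle' (by linarith)
      rw [mul_sub] at h1
      have h2 : Real.sqrt ((n : ℝ) * (Dr + Dc) / 2)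
          ≤ k * Real.sqrt ((n : ℝ) * (Dr + Dc) / 2) := by
        calc Real.sqrt ((n : ℝ) * (Dr + Dc) / 2)
            = 1 * Real.sqrt ((n : ℝ) * (Dr + Dc) / 2) := (one_mul _).symm
          _ ≤ k * Real.sqrt ((n : ℝ) * (Dr + Dc) / 2) :=
            mul_le_mul_of_nonneg_right hk hsqrtnn
      nlinarith [hblock, hXY, h1, h2, hsqrtnn, hk]
    have : (n : ℝ) * m = m * R.card + m * C.card + k * m := by
      simp only [hkdef]; ring
    linarith
end Cut


end MatCapAux

/-- Capacity lower bound for square nonnegative matrices: `cap(A) ≥ s - n √(Δ(A)/2)`. -/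
theorem matCap_ge_square {n : ℕ} (hn : 0 < n)
    (A : Matrix (Fin n) (Fin n) ℝ) (hA : ∀ i j, 0 ≤ A i j) :
    matSize A - (n : ℝ) * Real.sqrt (matDelta A / 2) ≤ matCap A := by
  classical
  have hnR : (0 : ℝ) < n := by exact_mod_cast hn
  set s : ℝ := ∑ i, ∑ j, A i j with hs
  have hsize : matSize A = s := rfl
  set m : ℝ := s / n - Real.sqrt (matDelta A / 2) with hm
  have hbound : matSize A - (n : ℝ) * Real.sqrt (matDelta A / 2) = (n : ℝ) * m := by
    rw [hsize, hm]
    field_simp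
  rw [hbound]
  have hdelta : matDelta A = (n : ℝ) * ((∑ i, ((∑ j, A i j) - (∑ i, ∑ j, A i j) / n) ^ 2)
      + ∑ j, ((∑ i, A i j) - (∑ i, ∑ j, A i j) / n) ^ 2) := by
    unfold matDelta matSize
    simp only [Fintype.card_fin]
    have h1 : ∀ t : ℝ, ((∑ i, ∑ j, A i j) - (n : ℝ) * t) ^ 2
        = (n : ℝ) ^ 2 * (t - (∑ i, ∑ j, A i j) / n) ^ 2 := by
      intro t
      field_simp
      ring
    rw [Finset.sum_congr rfl fun i _ => h1 (∑ j, A i j),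
      Finset.sum_congr rfl fun j _ => h1 (∑ i, A i j),
      ← Finset.mul_sum, ← Finset.mul_sum]
    field_simp
  -- lower-bound every member of the capacity set
  refine le_csInf ⟨_, ⟨fun _ => 1, fun j => one_pos, rfl⟩⟩ ?_
  rintro b ⟨x, hx, rfl⟩
  simp only [Fintype.card_fin]
  have hxn : ∀ j, 0 ≤ x j := fun j => (hx j).le
  have hAx : ∀ i, 0 ≤ A.mulVec x i := by
    intro i
    simp only [Matrix.mulVec, dotProduct]
    exact Finset.sum_nonneg fun j _ => mul_nonneg (hA i j) (hxn j)
  have hprodAx : 0 ≤ ∏ i, A.mulVec x i := Finset.prod_nonneg fun i _ => hAx i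
  have hprodx : 0 < ∏ j, x j := Finset.prod_pos fun j _ => hx j
  have hP : 0 < (∏ j, x j) ^ ((1 : ℝ) / n) := Real.rpow_pos_of_pos hprodx _
  have hbnn : 0 ≤ (n : ℝ) * (∏ i, A.mulVec x i) ^ ((1 : ℝ) / n) / (∏ j, x j) ^ ((1 : ℝ) / n) := by
    have : 0 ≤ (∏ i, A.mulVec x i) ^ ((1 : ℝ) / n) := Real.rpow_nonneg hprodAx _
    positivity
  rcases le_or_gt m 0 with hm0 | hm0
  · calc (n : ℝ) * m ≤ 0 := mul_nonpos_of_nonneg_of_nonpos hnR.le hm0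
      _ ≤ _ := hbnn
  · -- main case: use the doubly balanced subflow
    have hmle : m ≤ (∑ i, ∑ j, A i j) / n -
        Real.sqrt ((n : ℝ) * ((∑ i, ((∑ j, A i j) - (∑ i, ∑ j, A i j) / n) ^ 2)
          + ∑ j, ((∑ i, A i j) - (∑ i, ∑ j, A i j) / n) ^ 2) / 2) := by
      rw [hm, hdelta]
    obtain ⟨W, hW0, hWle, hWrow, hWcol⟩ := MatCapAux.exists_balanced m (fun i j => A i j)
      hm0.le hA (MatCapAux.cut_condition hn (fun i j => A i j) hA m hm0.le hmle)
    -- AM-GM on each row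
    have key : ∀ i, m * ∏ j, x j ^ (W i j / m) ≤ A.mulVec x i := by
      intro i
      have hgm := Real.geom_mean_le_arith_mean_weighted Finset.univ
        (fun j => W i j / m) x (fun j _ => div_nonneg (hW0 i j) hm0.le)
        (by rw [← Finset.sum_div, hWrow i, div_self hm0.ne']) (fun j _ => hxn j)
      have h2 : ∑ j, W i j / m * x j ≤ A.mulVec x i / m := by
        simp only [Matrix.mulVec, dotProduct]
        have : ∀ j, W i j / m * x j = W i j * x j / m := fun j => by ring
        rw [Finset.sum_congr rfl fun j _ => this j, ← Finset.sum_div]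
        rw [div_le_div_iff_of_pos_right hm0]
        exact Finset.sum_le_sum fun j _ =>
          mul_le_mul_of_nonneg_right (hWle i j) (hxn j)
      have h3 : ∏ j, x j ^ (W i j / m) ≤ A.mulVec x i / m := le_trans hgm h2
      rw [le_div_iff₀ hm0] at h3
      linarith [h3]
    -- multiply the row bounds
    have hprodfac : ∀ i, (0 : ℝ) ≤ m * ∏ j, x j ^ (W i j / m) := by
      intro i
      exact mul_nonneg hm0.le (Finset.prod_nonneg fun j _ => Real.rpow_nonneg (hxn j) _)
    have hGM : m ^ n * ∏ j, x j ≤ ∏ i, A.mulVec x i := by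
      have h1 : ∏ i, (m * ∏ j, x j ^ (W i j / m)) ≤ ∏ i, A.mulVec x i :=
        Finset.prod_le_prod (fun i _ => hprodfac i) (fun i _ => key i)
      have h2 : ∏ i, (m * ∏ j, x j ^ (W i j / m)) = m ^ n * ∏ j, x j := by
        rw [Finset.prod_mul_distrib, Finset.prod_const, Finset.card_univ, Fintype.card_fin]
        congr 1
        rw [Finset.prod_comm]
        refine Finset.prod_congr rfl fun j _ => ?_
        rw [← Real.rpow_sum_of_pos (hx j) (fun i => W i j / m) Finset.univ]
        rw [← Finset.sum_div, hWcol j, div_self hm0.ne', Real.rpow_one]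
      rw [← h2]
      exact h1
    have hfin : m * (∏ j, x j) ^ ((1 : ℝ) / n) ≤ (∏ i, A.mulVec x i) ^ ((1 : ℝ) / n) := by
      have h1 : (m ^ n * ∏ j, x j) ^ ((1 : ℝ) / n) ≤ (∏ i, A.mulVec x i) ^ ((1 : ℝ) / n) :=
        Real.rpow_le_rpow (mul_nonneg (pow_nonneg hm0.le n) hprodx.le) hGM (by positivity)
      have h2 : (m ^ n * ∏ j, x j) ^ ((1 : ℝ) / n)
          = (m ^ n) ^ ((1 : ℝ) / n) * (∏ j, x j) ^ ((1 : ℝ) / n) :=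
        Real.mul_rpow (pow_nonneg hm0.le n) hprodx.le
      have h3 : (m ^ n : ℝ) ^ ((1 : ℝ) / n) = m := by
        rw [← Real.rpow_natCast m n, ← Real.rpow_mul hm0.le]
        rw [mul_one_div, div_self hnR.ne', Real.rpow_one]
      rw [h2, h3] at h1
      exact h1
    rw [le_div_iff₀ hP]
    calc (n : ℝ) * m * (∏ j, x j) ^ ((1 : ℝ) / n)
        = (n : ℝ) * (m * (∏ j, x j) ^ ((1 : ℝ) / n)) := by ring
      _ ≤ (n : ℝ) * (∏ i, A.mulVec x i) ^ ((1 : ℝ) / n) :=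
          mul_le_mul_of_nonneg_left hfin hnR.le
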